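/- Let x_b ∈ I, let M, M̃ be integers with M ≥ M̃ ≥ 1, let λ_0, λ_1 ∈ ℂ, and let c_0, c_1, d_0, …, d_{M̃−1} : ℝ → ℂ be continuous on a neighborhood of 0. Assume that, as h → 0: c_1(h)·𝔈_1(h) − λ_1 = O(h^M); c_0(h) − h·λ_0 + c_1(h)·𝔈_0(h) = O(h^{M+1}); and, for each 0 ≤ ℓ ≤ M̃−1, d_ℓ(h) − h·c_1(h)·𝔉_ℓ(h) = O(h^{M̃−ℓ}). Then for every infinitely differentiable u : I → ℂ satisfying (a u')' + k u = f at every x ∈ I with x ≥ x_b, one has, as h → 0⁺: c_0(h)·u(x_b) + c_1(h)·u(x_b+h) − h·Σ_{ℓ=0}^{M̃−1} d_ℓ(h)·h^ℓ·f^{(ℓ)}(x_b) − h·(λ_0·u(x_b) + λ_1·u'(x_b)) = O(h^{M̃+1}); equivalently, the boundary scheme L_h^B u(x_b) := h^{−1}[c_0(h)u(x_b) + c_1(h)u(x_b+h)] − Σ_{ℓ=0}^{M̃−1} d_ℓ(h)h^ℓ f^{(ℓ)}(x_b) satisfies L_h^B u(x_b) − (λ_0 u(x_b) + λ_1 u'(x_b))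 = O(h^{M̃}). -/

import Mathlib

open Filter Topology Asymptotics

/-- `Ecoef a k n = (E_{n+2,0}, E_{n+2,1})` from the recursion of the paper. -/
noncomputable def Ecoef (a : ℝ → ℝ) (k : ℝ → ℂ) : ℕ → (ℝ → ℂ) × (ℝ → ℂ)
  | 0 => (fun x => -k x / (a x : ℂ), fun x => -((deriv a x : ℝ) : ℂ) / (a x : ℂ))
  | n + 1 =>
      (fun x => deriv (Ecoef a k n).1 x - k x / (a x : ℂ) * (Ecoef a k n).2 x,
       fun x => (Ecoef a k n).1 x + deriv (Ecoef a k n).2 x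
          - ((deriv a x : ℝ) : ℂ) / (a x : ℂ) * (Ecoef a k n).2 x)

/-- `E_{j,0}` for `j ≥ 2` (junk value for `j < 2`). -/
noncomputable def Ej0 (a : ℝ → ℝ) (k : ℝ → ℂ) (j : ℕ) : ℝ → ℂ := (Ecoef a k (j - 2)).1

/-- `E_{j,1}` for `j ≥ 2` (junk value for `j < 2`). -/
noncomputable def Ej1 (a : ℝ → ℝ) (k : ℝ → ℂ) (j : ℕ) : ℝ → ℂ := (Ecoef a k (j - 2)).2

/-- `Fcoef a k n m = F_{n+2, m-1}` (second index shifted by one: `m = ℓ + 1`, `ℓ ≥ -1`). -/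
noncomputable def Fcoef (a : ℝ → ℝ) (k : ℝ → ℂ) : ℕ → ℕ → ℝ → ℂ
  | 0, 0 => fun x => (Ecoef a k 0).2 x / (a x : ℂ)
  | 0, 1 => fun x => 1 / (a x : ℂ)
  | 0, _ + 2 => fun _ => 0
  | n + 1, 0 => fun x => (Ecoef a k (n + 1)).2 x / (a x : ℂ)
  | n + 1, m + 1 => fun x => deriv (Fcoef a k n (m + 1)) x + Fcoef a k n m x

/-- `F_{j,ℓ}` for `j ≥ 2`, `ℓ ≥ 0` (junk value for `j < 2`). -/
noncomputable def Fjl (a : ℝ → ℝ) (k : ℝ → ℂ) (j ℓ : ℕ) : ℝ → ℂ := Fcoef a k (j - 2) (ℓ + 1)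

/-- `𝔈₀(h) = 1 + ∑_{j=2}^{B} E_{j,0}(x_b) h^j / j!`. -/
noncomputable def EPoly0 (a : ℝ → ℝ) (k : ℝ → ℂ) (xb : ℝ) (B : ℕ) (h : ℝ) : ℂ :=
  1 + ∑ j ∈ Finset.Icc 2 B, Ej0 a k j xb * (h : ℂ) ^ j / (Nat.factorial j : ℂ)

/-- `𝔈₁(h) = 1 + ∑_{j=2}^{B} E_{j,1}(x_b) h^(j-1) / j!`. -/
noncomputable def EPoly1 (a : ℝ → ℝ) (k : ℝ → ℂ) (xb : ℝ) (B : ℕ) (h : ℝ) : ℂ :=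
  1 + ∑ j ∈ Finset.Icc 2 B, Ej1 a k j xb * (h : ℂ) ^ (j - 1) / (Nat.factorial j : ℂ)

/-- `𝔉_ℓ(h) = ∑_{j=ℓ+2}^{B} F_{j,ℓ}(x_b) h^(j-ℓ-2) / j!`. -/
noncomputable def FPoly (a : ℝ → ℝ) (k : ℝ → ℂ) (xb : ℝ) (ℓ B : ℕ) (h : ℝ) : ℂ :=
  ∑ j ∈ Finset.Icc (ℓ + 2) B, Fjl a k j ℓ xb * (h : ℂ) ^ (j - ℓ - 2) / (Nat.factorial j : ℂ)


section prelim
variable {F : Type*} [NormedAddCommGroup F] [NormedSpace ℝ F]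

lemma pow_isBigO_pow {D e : ℕ} (hDe : D ≤ e) :
    (fun h : ℝ => h ^ e) =O[𝓝 (0:ℝ)] fun h => h ^ D := by
  have h1 : ∀ᶠ h : ℝ in 𝓝 (0:ℝ), |h| ≤ 1 := by
    filter_upwards [Metric.ball_mem_nhds (0:ℝ) one_pos] with x hx
    rw [Metric.mem_ball, Real.dist_eq, sub_zero] at hx; exact hx.le
  refine IsBigO.of_bound 1 ?_
  filter_upwards [h1] with x hx
  rw [one_mul, Real.norm_eq_abs, Real.norm_eq_abs, abs_pow, abs_pow]
  exact pow_le_pow_of_le_one (abs_nonneg x) hx hDe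

lemma monoC {c : ℂ} {e D : ℕ} (hDe : D ≤ e) :
    (fun h : ℝ => c * (h:ℂ) ^ e) =O[𝓝 (0:ℝ)] fun h => h ^ D := by
  have h1 : (fun h : ℝ => (h:ℂ) ^ e) =O[𝓝 (0:ℝ)] fun h : ℝ => h ^ e := by
    refine IsBigO.of_bound 1 (Eventually.of_forall fun x => ?_)
    simp [← Complex.ofReal_pow]
  exact ((isBigO_refl _ _).const_mul_left c).trans (h1.trans (pow_isBigO_pow hDe))

lemma contDiffOn_iteratedDeriv' {g : ℝ → F} {s : Set ℝ} (hs : IsOpen s)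
    (hg : ContDiffOn ℝ (⊤:ℕ∞) g s) : ∀ m, ContDiffOn ℝ (⊤:ℕ∞) (iteratedDeriv m g) s
  | 0 => by simpa [iteratedDeriv_zero] using hg
  | (m+1) => by
      rw [iteratedDeriv_succ]
      exact (contDiffOn_iteratedDeriv' hs hg m).deriv_of_isOpen hs (by simp)

lemma diffAt_of_contDiffOn {g : ℝ → F} {s : Set ℝ} {x : ℝ} (hs : IsOpen s)
    (hg : ContDiffOn ℝ (⊤:ℕ∞) g s) (hx : x ∈ s) : DifferentiableAt ℝ g x :=
  (hg.contDiffAt (hs.mem_nhds hx)).differentiableAt (by simp)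

lemma deriv_eqOn_Ici {φ ψ : ℝ → ℂ} {x c : ℝ} (hx : c ≤ x)
    (hφ : DifferentiableAt ℝ φ x) (hψ : DifferentiableAt ℝ ψ x)
    (heq : ∀ᶠ y in 𝓝[Set.Ici c] x, φ y = ψ y) (hxeq : φ x = ψ x) :
    deriv φ x = deriv ψ x := by
  rw [← hφ.derivWithin (uniqueDiffOn_Ici c x hx), ← hψ.derivWithin (uniqueDiffOn_Ici c x hx)]
  exact Filter.EventuallyEq.derivWithin_eq heq hxeq

lemma iteratedDerivWithin_Icc_eq {u : ℝ → ℂ} {s : Set ℝ} (hs : IsOpen s)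
    (hu : ContDiffOn ℝ (⊤:ℕ∞) u s) {α β x : ℝ} (hαβ : α < β) (hsub : Set.Icc α β ⊆ s)
    (hx : x ∈ Set.Icc α β) (j : ℕ) :
    iteratedDerivWithin j u (Set.Icc α β) x = iteratedDeriv j u x := by
  have H := hu.ftaylorSeriesWithin hs.uniqueDiffOn
  have h1 := (H.mono hsub).eq_iteratedFDerivWithin_of_uniqueDiffOn (by exact_mod_cast le_top : (j:ℕ∞) ≤ ((⊤:ℕ∞) : WithTop ℕ∞))
    (uniqueDiffOn_Icc hαβ) hx
  have h2 := H.eq_iteratedFDerivWithin_of_uniqueDiffOn (by exact_mod_cast le_top : (j:ℕ∞) ≤ ((⊤:ℕ∞) : WithTop ℕ∞))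
    hs.uniqueDiffOn (hsub hx)
  have h3 := iteratedFDerivWithin_of_isOpen (𝕜 := ℝ) (f := u) j hs (hsub hx)
  rw [iteratedDerivWithin_eq_iteratedFDerivWithin, iteratedDeriv_eq_iteratedFDeriv,
    ← h1, h2, h3]

end prelim

section smooth
variable {a : ℝ → ℝ} {k : ℝ → ℂ} {s : Set ℝ}

lemma aC_smooth (hs : IsOpen s) (ha : ContDiffOn ℝ (⊤:ℕ∞) a s) :
    ContDiffOn ℝ (⊤:ℕ∞) (fun x => ((a x : ℝ) : ℂ)) s :=
  Complex.ofRealCLM.contDiff.comp_contDiffOn ha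

lemma daC_smooth (hs : IsOpen s) (ha : ContDiffOn ℝ (⊤:ℕ∞) a s) :
    ContDiffOn ℝ (⊤:ℕ∞) (fun x => ((deriv a x : ℝ) : ℂ)) s :=
  Complex.ofRealCLM.contDiff.comp_contDiffOn (ha.deriv_of_isOpen hs (by simp))

lemma divC {g1 g2 : ℝ → ℂ} {s : Set ℝ} (hf : ContDiffOn ℝ (⊤:ℕ∞) g1 s)
    (hg : ContDiffOn ℝ (⊤:ℕ∞) g2 s) (h0 : ∀ x ∈ s, g2 x ≠ 0) :
    ContDiffOn ℝ (⊤:ℕ∞) (fun x => g1 x / g2 x) s := by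
  simp only [div_eq_mul_inv]
  exact hf.mul (hg.inv h0)

lemma Ecoef_smooth (hs : IsOpen s) (ha : ContDiffOn ℝ (⊤:ℕ∞) a s)
    (hk : ContDiffOn ℝ (⊤:ℕ∞) k s) (ha0 : ∀ x ∈ s, ((a x : ℝ) : ℂ) ≠ 0) :
    ∀ n, ContDiffOn ℝ (⊤:ℕ∞) (Ecoef a k n).1 s ∧ ContDiffOn ℝ (⊤:ℕ∞) (Ecoef a k n).2 s
  | 0 => ⟨divC hk.neg (aC_smooth hs ha) ha0, divC (daC_smooth hs ha).neg (aC_smooth hs ha) ha0⟩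
  | (n+1) => by
      obtain ⟨h1, h2⟩ := Ecoef_smooth hs ha hk ha0 n
      exact ⟨(h1.deriv_of_isOpen hs (by simp)).sub ((divC hk (aC_smooth hs ha) ha0).mul h2),
        (h1.add (h2.deriv_of_isOpen hs (by simp))).sub
          ((divC (daC_smooth hs ha) (aC_smooth hs ha) ha0).mul h2)⟩

lemma Fcoef_smooth (hs : IsOpen s) (ha : ContDiffOn ℝ (⊤:ℕ∞) a s)
    (hk : ContDiffOn ℝ (⊤:ℕ∞) k s) (ha0 : ∀ x ∈ s, ((a x : ℝ) : ℂ) ≠ 0) :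
    ∀ n m, ContDiffOn ℝ (⊤:ℕ∞) (Fcoef a k n m) s
  | 0, 0 => divC ((Ecoef_smooth hs ha hk ha0 0).2) (aC_smooth hs ha) ha0
  | 0, 1 => divC contDiffOn_const (aC_smooth hs ha) ha0
  | 0, (m+2) => contDiffOn_const
  | (n+1), 0 => divC ((Ecoef_smooth hs ha hk ha0 (n+1)).2) (aC_smooth hs ha) ha0
  | (n+1), (m+1) =>
      ((Fcoef_smooth hs ha hk ha0 n (m+1)).deriv_of_isOpen hs (by simp)).add
        (Fcoef_smooth hs ha hk ha0 n m)

lemma Fcoef_zero_fun (a : ℝ → ℝ) (k : ℝ → ℂ) :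
    ∀ n m, n + 2 ≤ m → Fcoef a k n m = fun _ => 0
  | 0, (m+2), _ => rfl
  | (n+1), (m+1), hm => by
      have h1 : Fcoef a k n (m+1) = fun _ => 0 := Fcoef_zero_fun a k n (m+1) (by omega)
      have h2 : Fcoef a k n m = fun _ => 0 := Fcoef_zero_fun a k n m (by omega)
      show (fun x => deriv (Fcoef a k n (m+1)) x + Fcoef a k n m x) = fun _ => 0
      rw [h1, h2]
      funext x; simp

lemma Fcoef_zero' (a : ℝ → ℝ) (k : ℝ → ℂ) (n : ℕ) :
    Fcoef a k n 0 = fun x => (Ecoef a k n).2 x / ((a x : ℝ) : ℂ) := by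
  cases n <;> rfl

end smooth

section ident
variable {a : ℝ → ℝ} {k f u : ℝ → ℂ} {s : Set ℝ} {xb : ℝ}

lemma ode_u2 (hs : IsOpen s) (ha : ContDiffOn ℝ (⊤:ℕ∞) a s)
    (hu : ContDiffOn ℝ (⊤:ℕ∞) u s) (ha0 : ∀ x ∈ s, ((a x : ℝ) : ℂ) ≠ 0)
    (hode : ∀ x ∈ s, xb ≤ x → deriv (fun y => ((a y : ℝ) : ℂ) * deriv u y) x + k x * u x = f x)
    {x : ℝ} (hx : x ∈ s) (hxb : xb ≤ x) :
    deriv (deriv u) x = (-k x / ((a x : ℝ) : ℂ)) * u x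
      + (-((deriv a x : ℝ) : ℂ) / ((a x : ℝ) : ℂ)) * deriv u x + 1 / ((a x : ℝ) : ℂ) * f x := by
  have hode' := hode x hx hxb
  have hdu : DifferentiableAt ℝ (deriv u) x :=
    diffAt_of_contDiffOn hs (hu.deriv_of_isOpen hs (by simp)) hx
  have haD : HasDerivAt (fun y => ((a y : ℝ) : ℂ)) ((deriv a x : ℝ) : ℂ) x :=
    ((diffAt_of_contDiffOn hs ha hx).hasDerivAt).ofReal_comp
  have hprod := haD.fun_mul hdu.hasDerivAt
  rw [hprod.deriv] at hode'
  have hane := ha0 x hx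
  have h3 : deriv (deriv u) x
      = (f x - k x * u x - ((deriv a x : ℝ) : ℂ) * deriv u x) / ((a x : ℝ) : ℂ) := by
    rw [eq_div_iff hane]
    linear_combination hode'
  rw [h3]
  field_simp
  ring

lemma key_ident (hs : IsOpen s) (ha : ContDiffOn ℝ (⊤:ℕ∞) a s)
    (hk : ContDiffOn ℝ (⊤:ℕ∞) k s) (hf : ContDiffOn ℝ (⊤:ℕ∞) f s)
    (hu : ContDiffOn ℝ (⊤:ℕ∞) u s) (ha0 : ∀ x ∈ s, ((a x : ℝ) : ℂ) ≠ 0)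
    (hode : ∀ x ∈ s, xb ≤ x → deriv (fun y => ((a y : ℝ) : ℂ) * deriv u y) x + k x * u x = f x) :
    ∀ n, ∀ x ∈ s, xb ≤ x →
      iteratedDeriv (n+2) u x = (Ecoef a k n).1 x * u x + (Ecoef a k n).2 x * deriv u x
        + ∑ m ∈ Finset.range (n+1), Fcoef a k n (m+1) x * iteratedDeriv m f x := by
  intro n
  induction n with
  | zero =>
    intro x hx hxb
    have h2 : iteratedDeriv 2 u x = deriv (deriv u) x := by
      rw [show (2:ℕ) = 1 + 1 from rfl, iteratedDeriv_succ, iteratedDeriv_one]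
    rw [h2, ode_u2 hs ha hu ha0 hode hx hxb, Finset.sum_range_one, iteratedDeriv_zero]
    rfl
  | succ n IH =>
    intro x hx hxb
    have hE := Ecoef_smooth hs ha hk ha0 n
    have hE0 : HasDerivAt (Ecoef a k n).1 (deriv (Ecoef a k n).1 x) x :=
      (diffAt_of_contDiffOn hs hE.1 hx).hasDerivAt
    have hE1 : HasDerivAt (Ecoef a k n).2 (deriv (Ecoef a k n).2 x) x :=
      (diffAt_of_contDiffOn hs hE.2 hx).hasDerivAt
    have hU : HasDerivAt u (deriv u x) x := (diffAt_of_contDiffOn hs hu hx).hasDerivAt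
    have hU1 : HasDerivAt (deriv u) (deriv (deriv u) x) x :=
      (diffAt_of_contDiffOn hs (hu.deriv_of_isOpen hs (by simp)) hx).hasDerivAt
    have hF : ∀ m, HasDerivAt (Fcoef a k n (m+1)) (deriv (Fcoef a k n (m+1)) x) x :=
      fun m => (diffAt_of_contDiffOn hs (Fcoef_smooth hs ha hk ha0 n (m+1)) hx).hasDerivAt
    have hIf : ∀ m, HasDerivAt (iteratedDeriv m f) (iteratedDeriv (m+1) f x) x := by
      intro m
      rw [iteratedDeriv_succ]
      exact (diffAt_of_contDiffOn hs (contDiffOn_iteratedDeriv' hs hf m) hx).hasDerivAt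
    have hR : HasDerivAt
        (fun y => (Ecoef a k n).1 y * u y + (Ecoef a k n).2 y * deriv u y
          + ∑ m ∈ Finset.range (n+1), Fcoef a k n (m+1) y * iteratedDeriv m f y)
        ((deriv (Ecoef a k n).1 x * u x + (Ecoef a k n).1 x * deriv u x)
          + (deriv (Ecoef a k n).2 x * deriv u x + (Ecoef a k n).2 x * deriv (deriv u) x)
          + ∑ m ∈ Finset.range (n+1), (deriv (Fcoef a k n (m+1)) x * iteratedDeriv m f x
              + Fcoef a k n (m+1) x * iteratedDeriv (m+1) f x)) x :=
      ((hE0.mul hU).add (hE1.mul hU1)).add (HasDerivAt.fun_sum fun m _ => (hF m).fun_mul (hIf m))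
    have hdiffIter : DifferentiableAt ℝ (iteratedDeriv (n+2) u) x :=
      diffAt_of_contDiffOn hs (contDiffOn_iteratedDeriv' hs hu (n+2)) hx
    have hstep : iteratedDeriv (n+3) u x
        = (deriv (Ecoef a k n).1 x * u x + (Ecoef a k n).1 x * deriv u x)
          + (deriv (Ecoef a k n).2 x * deriv u x + (Ecoef a k n).2 x * deriv (deriv u) x)
          + ∑ m ∈ Finset.range (n+1), (deriv (Fcoef a k n (m+1)) x * iteratedDeriv m f x
              + Fcoef a k n (m+1) x * iteratedDeriv (m+1) f x) := by
      rw [show n+3 = (n+2)+1 from rfl, iteratedDeriv_succ, ← hR.deriv]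
      refine deriv_eqOn_Ici hxb hdiffIter hR.differentiableAt ?_ (IH x hx hxb)
      filter_upwards [mem_nhdsWithin_of_mem_nhds (hs.mem_nhds hx), self_mem_nhdsWithin]
        with y hy1 hy2
      exact IH y hy1 hy2
    rw [hstep, ode_u2 hs ha hu ha0 hode hx hxb]
    -- now pure algebra with sums
    have hsum1 : ∑ m ∈ Finset.range (n+1), (deriv (Fcoef a k n (m+1)) x * iteratedDeriv m f x
          + Fcoef a k n (m+1) x * iteratedDeriv (m+1) f x)
        = ∑ m ∈ Finset.range (n+1), deriv (Fcoef a k n (m+1)) x * iteratedDeriv m f x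
          + ∑ m ∈ Finset.range (n+1), Fcoef a k n (m+1) x * iteratedDeriv (m+1) f x :=
      Finset.sum_add_distrib
    have hEc1 : (Ecoef a k (n+1)).1 x
        = deriv (Ecoef a k n).1 x - k x / ((a x : ℝ) : ℂ) * (Ecoef a k n).2 x := rfl
    have hEc2 : (Ecoef a k (n+1)).2 x
        = (Ecoef a k n).1 x + deriv (Ecoef a k n).2 x
          - ((deriv a x : ℝ) : ℂ) / ((a x : ℝ) : ℂ) * (Ecoef a k n).2 x := rfl
    have hFc : ∀ m, Fcoef a k (n+1) (m+1) x
        = deriv (Fcoef a k n (m+1)) x + Fcoef a k n m x := fun m => rfl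
    have htarget : ∑ m ∈ Finset.range (n+2), Fcoef a k (n+1) (m+1) x * iteratedDeriv m f x
        = ∑ m ∈ Finset.range (n+1), deriv (Fcoef a k n (m+1)) x * iteratedDeriv m f x
          + ((Ecoef a k n).2 x / ((a x : ℝ) : ℂ) * f x
            + ∑ m ∈ Finset.range (n+1), Fcoef a k n (m+1) x * iteratedDeriv (m+1) f x) := by
      have e1 : ∀ m, Fcoef a k (n+1) (m+1) x * iteratedDeriv m f x
          = deriv (Fcoef a k n (m+1)) x * iteratedDeriv m f x
            + Fcoef a k n m x * iteratedDeriv m f x := by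
        intro m; rw [hFc m, add_mul]
      calc ∑ m ∈ Finset.range (n+2), Fcoef a k (n+1) (m+1) x * iteratedDeriv m f x
          = ∑ m ∈ Finset.range (n+2), deriv (Fcoef a k n (m+1)) x * iteratedDeriv m f x
            + ∑ m ∈ Finset.range (n+2), Fcoef a k n m x * iteratedDeriv m f x := by
            rw [← Finset.sum_add_distrib]; exact Finset.sum_congr rfl fun m _ => e1 m
        _ = ∑ m ∈ Finset.range (n+1), deriv (Fcoef a k n (m+1)) x * iteratedDeriv m f x
            + ((Ecoef a k n).2 x / ((a x : ℝ) : ℂ) * f x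
              + ∑ m ∈ Finset.range (n+1), Fcoef a k n (m+1) x * iteratedDeriv (m+1) f x) := by
            rw [Finset.sum_range_succ (fun m => deriv (Fcoef a k n (m+1)) x * iteratedDeriv m f x),
              Fcoef_zero_fun a k n (n+2) le_rfl]
            simp only [deriv_const', zero_mul, add_zero]
            rw [Finset.sum_range_succ' (fun m => Fcoef a k n m x * iteratedDeriv m f x)]
            rw [Fcoef_zero' a k n, iteratedDeriv_zero]
            ring
    rw [htarget, hEc1, hEc2, hsum1]
    ring
end ident

section taylor
lemma taylor_bigO {u : ℝ → ℂ} {s : Set ℝ} (hs : IsOpen s) (hu : ContDiffOn ℝ (⊤:ℕ∞) u s)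
    {xb b : ℝ} (hb : xb < b) (hsub : Set.Icc xb b ⊆ s) (N : ℕ) :
    (fun h : ℝ => u (xb + h)
        - ∑ j ∈ Finset.range (N+1), (((j.factorial : ℝ))⁻¹ * h ^ j) • iteratedDeriv j u xb)
      =O[𝓝[>] (0:ℝ)] fun h => h ^ (N+1) := by
  have hICC : ContDiffOn ℝ (N+1 : ℕ) u (Set.Icc xb b) :=
    (hu.of_le (by exact_mod_cast le_top)).mono hsub
  obtain ⟨C, hC⟩ := (isCompact_Icc (a := xb) (b := b)).exists_bound_of_continuousOn
    (hICC.continuousOn_iteratedDerivWithin (by exact_mod_cast le_rfl) (uniqueDiffOn_Icc hb))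
  refine IsBigO.of_bound (C / N.factorial) ?_
  filter_upwards [Ioc_mem_nhdsGT_of_mem (by simp [hb] : (0:ℝ) ∈ Set.Ico 0 (b - xb))]
    with h hh
  have hx : xb + h ∈ Set.Icc xb b := by
    constructor <;> [linarith [hh.1]; linarith [hh.2]]
  have hbd := taylor_mean_remainder_bound hb.le hICC hx hC
  rw [taylor_within_apply] at hbd
  have hpoly : ∑ j ∈ Finset.range (N+1),
        (((j.factorial : ℝ))⁻¹ * (xb + h - xb) ^ j) • iteratedDerivWithin j u (Set.Icc xb b) xb
      = ∑ j ∈ Finset.range (N+1), (((j.factorial : ℝ))⁻¹ * h ^ j) • iteratedDeriv j u xb := by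
    refine Finset.sum_congr rfl fun j _ => ?_
    rw [iteratedDerivWithin_Icc_eq hs hu hb hsub (Set.left_mem_Icc.2 hb.le) j,
      add_sub_cancel_left]
  rw [hpoly] at hbd
  have h1 : xb + h - xb = h := by ring
  rw [h1] at hbd
  calc ‖u (xb + h) - ∑ j ∈ Finset.range (N+1),
          (((j.factorial : ℝ))⁻¹ * h ^ j) • iteratedDeriv j u xb‖
      ≤ C * h ^ (N+1) / N.factorial := hbd
    _ = C / N.factorial * ‖h ^ (N+1)‖ := by
        rw [Real.norm_eq_abs, abs_pow, abs_of_pos hh.1]; ring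
end taylor

/-- Theorem 3.3, accuracy/boundary part.  Under the conditions (3.18) and
(3.19) on the boundary stencil coefficients `c₀, c₁` and `d₀, …, d_{M̃-1}`, the one-sided
boundary scheme approximates the boundary functional `B u = λ₀ u(x_b) + λ₁ u'(x_b)` with
accuracy order `M̃` (in the `h`-scaled form, `O(h^{M̃+1})` as `h → 0⁺`) for every smooth
solution of `(a u')' + k u = f` on the right side of `x_b`. -/
theorem boundary_stencil_accuracy_order
    (p q : ℝ) (a : ℝ → ℝ) (k f : ℝ → ℂ)
    (ha : ContDiffOn ℝ (⊤ : ℕ∞) a (Set.Ioo p q))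
    (hk : ContDiffOn ℝ (⊤ : ℕ∞) k (Set.Ioo p q))
    (hf : ContDiffOn ℝ (⊤ : ℕ∞) f (Set.Ioo p q))
    (hapos : ∀ x ∈ Set.Ioo p q, 0 < a x)
    (xb : ℝ) (hxb : xb ∈ Set.Ioo p q) (M Mt : ℕ) (hMt : 1 ≤ Mt) (hMMt : Mt ≤ M)
    (lam0 lam1 : ℂ) (c0 c1 : ℝ → ℂ) (d : ℕ → ℝ → ℂ)
    (hc0cont : ∃ U ∈ 𝓝 (0 : ℝ), ContinuousOn c0 U)
    (hc1cont : ∃ U ∈ 𝓝 (0 : ℝ), ContinuousOn c1 U)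
    (hdcont : ∀ ℓ < Mt, ∃ U ∈ 𝓝 (0 : ℝ), ContinuousOn (d ℓ) U)
    (hc1 : (fun h : ℝ => c1 h * EPoly1 a k xb (M + 1) h - lam1)
      =O[𝓝 (0 : ℝ)] fun h : ℝ => h ^ M)
    (hc0 : (fun h : ℝ => c0 h - (h : ℂ) * lam0 + c1 h * EPoly0 a k xb M h)
      =O[𝓝 (0 : ℝ)] fun h : ℝ => h ^ (M + 1))
    (hd : ∀ ℓ < Mt,
      (fun h : ℝ => d ℓ h - (h : ℂ) * c1 h * FPoly a k xb ℓ (Mt + 1) h)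
        =O[𝓝 (0 : ℝ)] fun h : ℝ => h ^ (Mt - ℓ)) :
    ∀ u : ℝ → ℂ, ContDiffOn ℝ (⊤ : ℕ∞) u (Set.Ioo p q) →
      (∀ x ∈ Set.Ioo p q, xb ≤ x →
        deriv (fun y => (a y : ℂ) * deriv u y) x + k x * u x = f x) →
      (fun h : ℝ => c0 h * u xb + c1 h * u (xb + h)
          - (h : ℂ) * ∑ ℓ ∈ Finset.range Mt, d ℓ h * (h : ℂ) ^ ℓ * iteratedDeriv ℓ f xb
          - (h : ℂ) * (lam0 * u xb + lam1 * deriv u xb))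
        =O[𝓝[>] (0 : ℝ)] fun h : ℝ => h ^ (Mt + 1) := by
  intro u hu hode
  have hs : IsOpen (Set.Ioo p q) := isOpen_Ioo
  have ha0 : ∀ x ∈ Set.Ioo p q, ((a x : ℝ) : ℂ) ≠ 0 := fun x hx => by
    exact_mod_cast (hapos x hx).ne'
  set b : ℝ := (xb + q) / 2 with hbdef
  have hb : xb < b := by simp only [hbdef]; linarith [hxb.2]
  have hbq : b < q := by simp only [hbdef]; linarith [hxb.2]
  have hsub : Set.Icc xb b ⊆ Set.Ioo p q := fun x hx =>
    ⟨lt_of_lt_of_le hxb.1 hx.1, lt_of_le_of_lt hx.2 hbq⟩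
  -- abbreviations
  have powC : ∀ n : ℕ, (fun h : ℝ => ((h : ℝ) : ℂ) ^ n) =O[𝓝 (0:ℝ)] fun h => h ^ n := by
    intro n; simpa using monoC (c := (1:ℂ)) (le_refl n)
  have hc1O : c1 =O[𝓝 (0:ℝ)] fun _ => (1:ℝ) := by
    obtain ⟨U, hU, hcont⟩ := hc1cont
    exact (hcont.continuousAt hU).isBigO_one ℝ
  have hFPolyO : ∀ (ℓ B : ℕ), (fun h : ℝ => FPoly a k xb ℓ B h) =O[𝓝 (0:ℝ)] fun _ => (1:ℝ) := by
    intro ℓ B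
    have hcont : Continuous fun h : ℝ => FPoly a k xb ℓ B h := by
      simp only [FPoly]
      exact continuous_finset_sum _ fun j _ =>
        (continuous_const.mul (Complex.continuous_ofReal.pow _)).div_const _
    exact (hcont.tendsto 0).isBigO_one ℝ
  -- the derivative identity at xb
  have keyT : ∀ j, 2 ≤ j → iteratedDeriv j u xb
      = Ej0 a k j xb * u xb + Ej1 a k j xb * deriv u xb
        + ∑ ℓ ∈ Finset.range (j-1), Fjl a k j ℓ xb * iteratedDeriv ℓ f xb := by
    intro j hj
    obtain ⟨n, rfl⟩ : ∃ n, j = n + 2 := ⟨j - 2, by omega⟩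
    have := key_ident hs ha hk hf hu ha0 hode n xb hxb le_rfl
    rw [this]
    simp only [Ej0, Ej1, Fjl, Nat.add_sub_cancel]
    norm_num
  -- Taylor rearrangement
  have key3 : ∀ h : ℝ,
      ∑ j ∈ Finset.range (M+2), (((j.factorial : ℝ))⁻¹ * h ^ j) • iteratedDeriv j u xb
      = u xb * EPoly0 a k xb (M+1) h + deriv u xb * ((h:ℂ) * EPoly1 a k xb (M+1) h)
        + ∑ ℓ ∈ Finset.range M, (h:ℂ)^(ℓ+2) * FPoly a k xb ℓ (M+1) h * iteratedDeriv ℓ f xb := by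
    intro h
    have hg : ∀ j : ℕ, (((j.factorial : ℝ))⁻¹ * h ^ j) • iteratedDeriv j u xb
        = (h:ℂ)^j / (j.factorial : ℂ) * iteratedDeriv j u xb := by
      intro j
      rw [Complex.real_smul]
      push_cast
      ring
    simp only [hg]
    have e1 : ∑ j ∈ Finset.range (M+2), (h:ℂ)^j / (j.factorial : ℂ) * iteratedDeriv j u xb
        = (∑ j ∈ Finset.range 2, (h:ℂ)^j / (j.factorial : ℂ) * iteratedDeriv j u xb)
          + ∑ j ∈ Finset.Icc 2 (M+1), (h:ℂ)^j / (j.factorial : ℂ) * iteratedDeriv j u xb := by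
      rw [Finset.range_eq_Ico, Finset.range_eq_Ico, ← Finset.Ico_add_one_right_eq_Icc 2 (M+1)]
      exact (Finset.sum_Ico_consecutive _ (by omega : 0 ≤ 2) (by omega : 2 ≤ M+1+1)).symm
    rw [e1]
    have e0 : ∑ j ∈ Finset.range 2, (h:ℂ)^j / (j.factorial : ℂ) * iteratedDeriv j u xb
        = u xb + (h:ℂ) * deriv u xb := by
      rw [Finset.sum_range_succ, Finset.sum_range_one, iteratedDeriv_zero, iteratedDeriv_one]
      norm_num
    rw [e0]
    have e2 : ∑ j ∈ Finset.Icc 2 (M+1), (h:ℂ)^j / (j.factorial : ℂ) * iteratedDeriv j u xb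
        = ∑ j ∈ Finset.Icc 2 (M+1),
            (u xb * (Ej0 a k j xb * (h:ℂ)^j / (j.factorial : ℂ))
             + deriv u xb * ((h:ℂ) * (Ej1 a k j xb * (h:ℂ)^(j-1) / (j.factorial : ℂ)))
             + ∑ ℓ ∈ Finset.range (j-1),
                 (h:ℂ)^j / (j.factorial : ℂ) * (Fjl a k j ℓ xb * iteratedDeriv ℓ f xb)) := by
      refine Finset.sum_congr rfl fun j hj => ?_
      rw [Finset.mem_Icc] at hj
      rw [keyT j hj.1]
      have hpow : (h:ℂ)^j = (h:ℂ)^(j-1) * h := by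
        rw [← pow_succ]; congr 1; omega
      rw [mul_add, mul_add, Finset.mul_sum]
      congr 1
      rw [hpow]; ring
    rw [e2, Finset.sum_add_distrib, Finset.sum_add_distrib]
    have e3 : ∑ j ∈ Finset.Icc 2 (M+1), u xb * (Ej0 a k j xb * (h:ℂ)^j / (j.factorial : ℂ))
        = u xb * ∑ j ∈ Finset.Icc 2 (M+1), Ej0 a k j xb * (h:ℂ)^j / (j.factorial : ℂ) :=
      (Finset.mul_sum _ _ _).symm
    have e4 : ∑ j ∈ Finset.Icc 2 (M+1),
          deriv u xb * ((h:ℂ) * (Ej1 a k j xb * (h:ℂ)^(j-1) / (j.factorial : ℂ)))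
        = deriv u xb * ((h:ℂ) * ∑ j ∈ Finset.Icc 2 (M+1),
            Ej1 a k j xb * (h:ℂ)^(j-1) / (j.factorial : ℂ)) := by
      rw [Finset.mul_sum, Finset.mul_sum]
    have e5 : ∑ j ∈ Finset.Icc 2 (M+1), ∑ ℓ ∈ Finset.range (j-1),
          (h:ℂ)^j / (j.factorial : ℂ) * (Fjl a k j ℓ xb * iteratedDeriv ℓ f xb)
        = ∑ ℓ ∈ Finset.range M, (h:ℂ)^(ℓ+2) * FPoly a k xb ℓ (M+1) h * iteratedDeriv ℓ f xb := by
      rw [Finset.sum_comm' (s' := fun ℓ => Finset.Icc (ℓ+2) (M+1)) (t' := Finset.range M)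
        (by intro x y; simp only [Finset.mem_Icc, Finset.mem_range]; omega)]
      refine Finset.sum_congr rfl fun ℓ _ => ?_
      simp only [FPoly]
      rw [Finset.mul_sum, Finset.sum_mul]
      refine Finset.sum_congr rfl fun j hj => ?_
      rw [Finset.mem_Icc] at hj
      have hpow : (h:ℂ)^j = (h:ℂ)^(ℓ+2) * (h:ℂ)^(j-ℓ-2) := by
        rw [← pow_add]; congr 1; omega
      rw [hpow]; ring
    rw [e3, e4, e5]
    simp only [EPoly0, EPoly1]
    ring
  -- decompose sums
  have hEP0 : ∀ h : ℝ, EPoly0 a k xb (M+1) h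
      = EPoly0 a k xb M h + Ej0 a k (M+1) xb * (h:ℂ)^(M+1) / (((M+1).factorial : ℕ) : ℂ) := by
    intro h
    simp only [EPoly0]
    rw [Finset.sum_Icc_succ_top (by omega : 2 ≤ M+1)]
    ring
  have hsplitF : ∀ h : ℝ,
      ∑ ℓ ∈ Finset.range M, (h:ℂ)^(ℓ+2) * FPoly a k xb ℓ (M+1) h * iteratedDeriv ℓ f xb
      = (∑ ℓ ∈ Finset.range Mt, (h:ℂ)^(ℓ+2) * FPoly a k xb ℓ (M+1) h * iteratedDeriv ℓ f xb)
        + ∑ ℓ ∈ Finset.Ico Mt M, (h:ℂ)^(ℓ+2) * FPoly a k xb ℓ (M+1) h * iteratedDeriv ℓ f xb := by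
    intro h
    rw [Finset.range_eq_Ico, Finset.range_eq_Ico]
    exact (Finset.sum_Ico_consecutive _ (Nat.zero_le Mt) hMMt).symm
  have hsum4 : ∀ h : ℝ,
      c1 h * ∑ ℓ ∈ Finset.range Mt, (h:ℂ)^(ℓ+2) * FPoly a k xb ℓ (M+1) h * iteratedDeriv ℓ f xb
        - (h:ℂ) * ∑ ℓ ∈ Finset.range Mt, d ℓ h * (h:ℂ)^ℓ * iteratedDeriv ℓ f xb
      = ∑ ℓ ∈ Finset.range Mt,
          (-(h:ℂ)^(ℓ+1) * (d ℓ h - (h:ℂ) * c1 h * FPoly a k xb ℓ (Mt+1) h)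
            + (h:ℂ)^(ℓ+2) * c1 h * (FPoly a k xb ℓ (M+1) h - FPoly a k xb ℓ (Mt+1) h))
          * iteratedDeriv ℓ f xb := by
    intro h
    rw [Finset.mul_sum, Finset.mul_sum, ← Finset.sum_sub_distrib]
    refine Finset.sum_congr rfl fun ℓ _ => ?_
    ring
  have hsum5 : ∀ h : ℝ,
      c1 h * ∑ ℓ ∈ Finset.Ico Mt M, (h:ℂ)^(ℓ+2) * FPoly a k xb ℓ (M+1) h * iteratedDeriv ℓ f xb
      = ∑ ℓ ∈ Finset.Ico Mt M,
          c1 h * ((h:ℂ)^(ℓ+2) * FPoly a k xb ℓ (M+1) h * iteratedDeriv ℓ f xb) :=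
    fun h => Finset.mul_sum _ _ _
  -- the pointwise decomposition
  have hdecomp : ∀ h : ℝ,
      c0 h * u xb + c1 h * u (xb + h)
        - (h:ℂ) * ∑ ℓ ∈ Finset.range Mt, d ℓ h * (h:ℂ)^ℓ * iteratedDeriv ℓ f xb
        - (h:ℂ) * (lam0 * u xb + lam1 * deriv u xb)
      = (c0 h - (h:ℂ) * lam0 + c1 h * EPoly0 a k xb M h) * u xb
        + c1 h * (Ej0 a k (M+1) xb * (h:ℂ)^(M+1) / (((M+1).factorial : ℕ) : ℂ)) * u xb
        + (h:ℂ) * (c1 h * EPoly1 a k xb (M+1) h - lam1) * deriv u xb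
        + (∑ ℓ ∈ Finset.range Mt,
            (-(h:ℂ)^(ℓ+1) * (d ℓ h - (h:ℂ) * c1 h * FPoly a k xb ℓ (Mt+1) h)
              + (h:ℂ)^(ℓ+2) * c1 h * (FPoly a k xb ℓ (M+1) h - FPoly a k xb ℓ (Mt+1) h))
            * iteratedDeriv ℓ f xb)
        + (∑ ℓ ∈ Finset.Ico Mt M,
            c1 h * ((h:ℂ)^(ℓ+2) * FPoly a k xb ℓ (M+1) h * iteratedDeriv ℓ f xb))
        + c1 h * (u (xb + h)
            - ∑ j ∈ Finset.range (M+2), (((j.factorial : ℝ))⁻¹ * h ^ j) • iteratedDeriv j u xb) := by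
    intro h
    linear_combination (c1 h) * (key3 h) + (c1 h * u xb) * (hEP0 h) + (c1 h) * (hsplitF h)
      + hsum4 h + hsum5 h
  -- big-O of the pieces
  have bO1 : (fun h : ℝ => (c0 h - (h:ℂ) * lam0 + c1 h * EPoly0 a k xb M h) * u xb)
      =O[𝓝 (0:ℝ)] fun h => h ^ (Mt+1) := by
    have := hc0.mul (isBigO_const_const (u xb) one_ne_zero (𝓝 (0:ℝ)))
    simp only [mul_one] at this
    exact this.trans (pow_isBigO_pow (by omega))
  have bO2 : (fun h : ℝ =>
        c1 h * (Ej0 a k (M+1) xb * (h:ℂ)^(M+1) / (((M+1).factorial : ℕ) : ℂ)) * u xb)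
      =O[𝓝 (0:ℝ)] fun h => h ^ (Mt+1) := by
    have h1 : (fun h : ℝ => Ej0 a k (M+1) xb * (h:ℂ)^(M+1) / (((M+1).factorial : ℕ) : ℂ))
        =O[𝓝 (0:ℝ)] fun h => h ^ (Mt+1) :=
      ((monoC (c := Ej0 a k (M+1) xb / (((M+1).factorial : ℕ) : ℂ)) (by omega : Mt+1 ≤ M+1)).congr'
        (Eventually.of_forall fun h => by ring) EventuallyEq.rfl)
    have := (hc1O.mul h1).mul (isBigO_const_const (u xb) one_ne_zero (𝓝 (0:ℝ)))
    simp only [one_mul, mul_one] at this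
    exact this
  have bO3 : (fun h : ℝ => (h:ℂ) * (c1 h * EPoly1 a k xb (M+1) h - lam1) * deriv u xb)
      =O[𝓝 (0:ℝ)] fun h => h ^ (Mt+1) := by
    have h1 : (fun h : ℝ => (h:ℂ)) =O[𝓝 (0:ℝ)] fun h => h := by
      simpa using powC 1
    have := (h1.mul hc1).mul (isBigO_const_const (deriv u xb) one_ne_zero (𝓝 (0:ℝ)))
    simp only [mul_one] at this
    refine this.trans ?_
    have : (fun h : ℝ => h * h ^ M) = fun h => h ^ (M+1) := funext fun h => (pow_succ' h M).symm
    rw [this]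
    exact pow_isBigO_pow (by omega)
  have hFdiff : ∀ ℓ, ℓ < Mt →
      (fun h : ℝ => FPoly a k xb ℓ (M+1) h - FPoly a k xb ℓ (Mt+1) h)
        =O[𝓝 (0:ℝ)] fun h => h ^ (Mt - ℓ) := by
    intro ℓ hℓ
    have hsplit : ∀ h : ℝ, FPoly a k xb ℓ (M+1) h - FPoly a k xb ℓ (Mt+1) h
        = ∑ j ∈ Finset.Ico (Mt+2) (M+2), Fjl a k j ℓ xb * (h:ℂ)^(j-ℓ-2) / (j.factorial : ℂ) := by
      intro h
      simp only [FPoly]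
      rw [← Finset.Ico_add_one_right_eq_Icc (ℓ+2) (M+1), ← Finset.Ico_add_one_right_eq_Icc (ℓ+2) (Mt+1),
        show M+1+1 = M+2 from rfl, show Mt+1+1 = Mt+2 from rfl,
        ← Finset.sum_Ico_consecutive _ (by omega : ℓ+2 ≤ Mt+2) (by omega : Mt+2 ≤ M+2)]
      ring
    have hbig : (fun h : ℝ => ∑ j ∈ Finset.Ico (Mt+2) (M+2),
          Fjl a k j ℓ xb * (h:ℂ)^(j-ℓ-2) / (j.factorial : ℂ))
        =O[𝓝 (0:ℝ)] fun h => h ^ (Mt - ℓ) := by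
      refine IsBigO.fun_sum fun j hj => ?_
      rw [Finset.mem_Ico] at hj
      exact (monoC (c := Fjl a k j ℓ xb / (j.factorial : ℂ)) (by omega : Mt - ℓ ≤ j - ℓ - 2)).congr'
        (Eventually.of_forall fun h => by ring) EventuallyEq.rfl
    exact hbig.congr' (Eventually.of_forall fun h => (hsplit h).symm) EventuallyEq.rfl
  have bO4 : (fun h : ℝ => ∑ ℓ ∈ Finset.range Mt,
        (-(h:ℂ)^(ℓ+1) * (d ℓ h - (h:ℂ) * c1 h * FPoly a k xb ℓ (Mt+1) h)
          + (h:ℂ)^(ℓ+2) * c1 h * (FPoly a k xb ℓ (M+1) h - FPoly a k xb ℓ (Mt+1) h))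
        * iteratedDeriv ℓ f xb)
      =O[𝓝 (0:ℝ)] fun h => h ^ (Mt+1) := by
    refine IsBigO.fun_sum fun ℓ hℓ => ?_
    rw [Finset.mem_range] at hℓ
    have hA : (fun h : ℝ => -(h:ℂ)^(ℓ+1) * (d ℓ h - (h:ℂ) * c1 h * FPoly a k xb ℓ (Mt+1) h))
        =O[𝓝 (0:ℝ)] fun h => h ^ (Mt+1) := by
      have := ((powC (ℓ+1)).neg_left).mul (hd ℓ hℓ)
      refine this.trans ?_
      have heq : (fun h : ℝ => h ^ (ℓ+1) * h ^ (Mt-ℓ)) = fun h => h ^ (Mt+1) :=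
        funext fun h => by rw [← pow_add]; congr 1; omega
      rw [heq]
      exact isBigO_refl _ _
    have hB : (fun h : ℝ =>
          (h:ℂ)^(ℓ+2) * c1 h * (FPoly a k xb ℓ (M+1) h - FPoly a k xb ℓ (Mt+1) h))
        =O[𝓝 (0:ℝ)] fun h => h ^ (Mt+1) := by
      have := ((powC (ℓ+2)).mul hc1O).mul (hFdiff ℓ hℓ)
      refine this.trans ?_
      have heq : (fun h : ℝ => h ^ (ℓ+2) * 1 * h ^ (Mt-ℓ)) = fun h => h ^ (Mt+2) :=
        funext fun h => by rw [mul_one, ← pow_add]; congr 1; omega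
      rw [heq]
      exact pow_isBigO_pow (by omega)
    have := (hA.add hB).mul (isBigO_const_const (iteratedDeriv ℓ f xb) one_ne_zero (𝓝 (0:ℝ)))
    simp only [mul_one] at this
    exact this
  have bO5 : (fun h : ℝ => ∑ ℓ ∈ Finset.Ico Mt M,
        c1 h * ((h:ℂ)^(ℓ+2) * FPoly a k xb ℓ (M+1) h * iteratedDeriv ℓ f xb))
      =O[𝓝 (0:ℝ)] fun h => h ^ (Mt+1) := by
    refine IsBigO.fun_sum fun ℓ hℓ => ?_
    rw [Finset.mem_Ico] at hℓ
    have := hc1O.mul (((powC (ℓ+2)).mul (hFPolyO ℓ (M+1))).mul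
      (isBigO_const_const (iteratedDeriv ℓ f xb) one_ne_zero (𝓝 (0:ℝ))))
    simp only [one_mul, mul_one] at this
    refine this.trans ?_
    exact pow_isBigO_pow (by omega)
  have bO6 : (fun h : ℝ => c1 h * (u (xb + h)
        - ∑ j ∈ Finset.range (M+2), (((j.factorial : ℝ))⁻¹ * h ^ j) • iteratedDeriv j u xb))
      =O[𝓝[>] (0:ℝ)] fun h => h ^ (Mt+1) := by
    have := (hc1O.mono nhdsWithin_le_nhds).mul (taylor_bigO hs hu hb hsub (M+1))
    simp only [one_mul] at this
    exact this.trans ((pow_isBigO_pow (by omega : Mt+1 ≤ M+2)).mono nhdsWithin_le_nhds)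
  have total := ((((((bO1.mono nhdsWithin_le_nhds).add (bO2.mono nhdsWithin_le_nhds)).add
      (bO3.mono nhdsWithin_le_nhds)).add (bO4.mono nhdsWithin_le_nhds)).add
      (bO5.mono nhdsWithin_le_nhds)).add bO6)
  exact total.congr' (Eventually.of_forall fun h => (hdecomp h).symm) EventuallyEq.rfl
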